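/- Let F : X → Y be Fréchet differentiable between Hilbert spaces satisfying: ‖F'(u)‖ ≤ M; the weak tangential cone condition 2⟨F(u) − F(v), F'(u)(u − v)⟩ ≥ (M² + μ)‖F(u) − F(v)‖² for all u, v in a ball B; and the lower bound ‖F'(u)* y‖ ≥ (1/C)‖y‖ for all y ∈ Y and u in the interior of B. If C²(C²M² − 1) < μ, then the Landweber residuals decrease strictly: ‖F(u_{k+1}) − φ‖ < ‖F(u_k) − φ‖ whenever ‖F(u_k) − φ‖ ≠ 0 and u_k, u_{k+1} lie in the interior of B. -/
import Mathlib


open RealInnerProductSpace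

set_option maxHeartbeats 2000000

/-- Strict monotonicity of the Landweber residuals under the weak tangential
cone condition, coercivity with `α = 1` and the lower bound on the adjoint,
provided `C²(C²M² − 1) < μ`. -/
theorem landweber_residual_strictly_decreasing
    {X Y : Type*} [NormedAddCommGroup X] [InnerProductSpace ℝ X] [CompleteSpace X]
    [NormedAddCommGroup Y] [InnerProductSpace ℝ Y] [CompleteSpace Y]
    (F : X → Y) (F' : X → X →L[ℝ] Y) (hF : ∀ u, HasFDerivAt F (F' u) u)
    (B : Set X) (φ : Y)
    (M μ C : ℝ) (hM : 0 < M) (hMs : M < Real.sqrt 2) (hμ : 0 < μ) (hC : 0 < C)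
    (hbound : ∀ u ∈ B, ‖F' u‖ ≤ M)
    (htcc : ∀ u ∈ B, ∀ v ∈ B,
      2 * ⟪F u - F v, F' u (u - v)⟫ ≥ (M ^ 2 + μ) * ‖F u - F v‖ ^ 2)
    (hcoe : ∀ u ∈ B, ∀ v ∈ B, (1 / C) * ‖u - v‖ ≤ ‖F u - F v‖)
    (hadjlow : ∀ u ∈ interior B, ∀ y : Y,
      (1 / C) * ‖y‖ ≤ ‖ContinuousLinearMap.adjoint (F' u) y‖)
    (hconst : C ^ 2 * (C ^ 2 * M ^ 2 - 1) < μ)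
    (uk uk1 : X)
    (hstep : uk1 = uk - ContinuousLinearMap.adjoint (F' uk) (F uk - φ))
    (hk : uk ∈ interior B) (hk1 : uk1 ∈ interior B)
    (hres : F uk ≠ φ) :
    ‖F uk1 - φ‖ < ‖F uk - φ‖ := by
  have hkB : uk ∈ B := interior_subset hk
  have hk1B : uk1 ∈ B := interior_subset hk1
  set A : X →L[ℝ] Y := F' uk with hA
  set As : Y →L[ℝ] X := ContinuousLinearMap.adjoint (F' uk) with hAsdef
  set r : Y := F uk - φ with hrdef
  set d : Y := F uk1 - F uk with hddef
  have hρ : 0 < ‖r‖ := norm_pos_iff.mpr (sub_ne_zero.mpr hres)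
  have hAsnorm : ‖As‖ ≤ M := by
    rw [hAsdef, LinearIsometryEquiv.norm_map ContinuousLinearMap.adjoint (F' uk)]
    exact hbound uk hkB
  have hAs_le : ∀ y : Y, ‖As y‖ ≤ M * ‖y‖ := fun y =>
    (As.le_opNorm y).trans (mul_le_mul_of_nonneg_right hAsnorm (norm_nonneg y))
  have hAs_low : ∀ y : Y, (1 / C) * ‖y‖ ≤ ‖As y‖ := hadjlow uk hk
  -- 1 ≤ C * M
  have hCM : 1 ≤ C * M := by
    have h1 := hAs_low r
    have h2 := hAs_le r
    have : (1 / C) * ‖r‖ ≤ M * ‖r‖ := h1.trans h2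
    rw [div_mul_eq_mul_div, div_le_iff₀ hC] at this
    nlinarith
  have hK0 : 0 ≤ C ^ 2 * M ^ 2 - 1 := by nlinarith
  -- step geometry
  have hsub : uk - uk1 = As r := by rw [hstep]; exact sub_sub_cancel _ _
  have hsub' : uk1 - uk = -(As r) := by rw [hstep]; abel
  -- lower bound on ‖d‖
  have ht_low : ‖r‖ / C ^ 2 ≤ ‖d‖ := by
    have h1 := hcoe uk1 hk1B uk hkB
    rw [hsub', norm_neg] at h1
    have h2 := hAs_low r
    have hne : ‖F uk1 - F uk‖ = ‖d‖ := rfl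
    rw [hne] at h1
    have hCinv : 0 < 1 / C := by positivity
    have : (1 / C) * ((1 / C) * ‖r‖) ≤ ‖d‖ :=
      le_trans (mul_le_mul_of_nonneg_left h2 hCinv.le) h1
    calc ‖r‖ / C ^ 2 = (1 / C) * ((1 / C) * ‖r‖) := by ring
      _ ≤ ‖d‖ := this
  have ht_pos : 0 < ‖d‖ := lt_of_lt_of_le (by positivity) ht_low
  -- tangential cone condition rewritten
  have htc : ⟪As d, As r⟫ ≤ -((M ^ 2 + μ) * ‖d‖ ^ 2) / 2 := by
    have h := htcc uk hkB uk1 hk1B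
    rw [hsub] at h
    have hfd : F uk - F uk1 = -d := by rw [hddef]; abel
    rw [hfd, norm_neg] at h
    have hnd : ‖-d‖ = ‖d‖ := norm_neg d
    have hadj : ⟪As d, As r⟫ = ⟪d, A (As r)⟫ :=
      ContinuousLinearMap.adjoint_inner_left A (As r) d
    have hneg : ⟪-d, A (As r)⟫ = -⟪d, A (As r)⟫ := inner_neg_left _ _
    rw [hneg] at h
    rw [hadj]
    linarith [h]
  -- quadratic form bounds for S = (1 + C²M²) I - 2 C² As*As
  have hquad_up : ∀ y : Y,
      (1 + C ^ 2 * M ^ 2) * ‖y‖ ^ 2 - 2 * C ^ 2 * ‖As y‖ ^ 2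
        ≤ (C ^ 2 * M ^ 2 - 1) * ‖y‖ ^ 2 := by
    intro y
    have h' : ‖y‖ ≤ C * ‖As y‖ := by
      have h := hAs_low y
      rw [div_mul_eq_mul_div, div_le_iff₀ hC] at h
      nlinarith [h]
    have hsq : ‖y‖ * ‖y‖ ≤ (C * ‖As y‖) * (C * ‖As y‖) :=
      mul_self_le_mul_self (norm_nonneg y) h'
    nlinarith [hsq]
  have hquad_down : ∀ y : Y,
      -((C ^ 2 * M ^ 2 - 1) * ‖y‖ ^ 2)
        ≤ (1 + C ^ 2 * M ^ 2) * ‖y‖ ^ 2 - 2 * C ^ 2 * ‖As y‖ ^ 2 := by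
    intro y
    have hsq : ‖As y‖ * ‖As y‖ ≤ (M * ‖y‖) * (M * ‖y‖) :=
      mul_self_le_mul_self (norm_nonneg (As y)) (hAs_le y)
    have h2 : C ^ 2 * (‖As y‖ * ‖As y‖) ≤ C ^ 2 * ((M * ‖y‖) * (M * ‖y‖)) :=
      mul_le_mul_of_nonneg_left hsq (by positivity)
    nlinarith [h2]
  -- polarization: Φ(d, r) ≤ K ‖d‖ ‖r‖
  have hpolar : (1 + C ^ 2 * M ^ 2) * ⟪d, r⟫ - 2 * C ^ 2 * ⟪As d, As r⟫
      ≤ (C ^ 2 * M ^ 2 - 1) * ‖d‖ * ‖r‖ := by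
    set y₁ : Y := ‖r‖ • d + ‖d‖ • r with hy₁
    set y₂ : Y := ‖r‖ • d - ‖d‖ • r with hy₂
    have e1 : ‖y₁‖ ^ 2 = ‖r‖ ^ 2 * ‖d‖ ^ 2 + 2 * (‖r‖ * ‖d‖) * ⟪d, r⟫ + ‖d‖ ^ 2 * ‖r‖ ^ 2 := by
      rw [hy₁, @norm_add_sq_real, real_inner_smul_left, real_inner_smul_right, norm_smul,
        norm_smul]
      simp [abs_of_nonneg (norm_nonneg _)]
      ring
    have e2 : ‖y₂‖ ^ 2 = ‖r‖ ^ 2 * ‖d‖ ^ 2 - 2 * (‖r‖ * ‖d‖) * ⟪d, r⟫ + ‖d‖ ^ 2 * ‖r‖ ^ 2 := by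
      rw [hy₂, @norm_sub_sq_real, real_inner_smul_left, real_inner_smul_right, norm_smul,
        norm_smul]
      simp [abs_of_nonneg (norm_nonneg _)]
      ring
    have f1 : ‖As y₁‖ ^ 2 = ‖r‖ ^ 2 * ‖As d‖ ^ 2 + 2 * (‖r‖ * ‖d‖) * ⟪As d, As r⟫
        + ‖d‖ ^ 2 * ‖As r‖ ^ 2 := by
      rw [hy₁, map_add, map_smul, map_smul, @norm_add_sq_real, real_inner_smul_left,
        real_inner_smul_right, norm_smul, norm_smul]
      simp [abs_of_nonneg (norm_nonneg _)]
      ring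
    have f2 : ‖As y₂‖ ^ 2 = ‖r‖ ^ 2 * ‖As d‖ ^ 2 - 2 * (‖r‖ * ‖d‖) * ⟪As d, As r⟫
        + ‖d‖ ^ 2 * ‖As r‖ ^ 2 := by
      rw [hy₂, map_sub, map_smul, map_smul, @norm_sub_sq_real, real_inner_smul_left,
        real_inner_smul_right, norm_smul, norm_smul]
      simp [abs_of_nonneg (norm_nonneg _)]
      ring
    have g1 := hquad_up y₁
    have g2 := hquad_down y₂
    rw [e1, f1] at g1
    rw [e2, f2] at g2
    have hpos : 0 < ‖r‖ * ‖d‖ := mul_pos hρ ht_pos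
    nlinarith [g1, g2, hpos]
  -- combine
  have hKμ : (C ^ 2 * M ^ 2 - 1) + 2 * C ^ 2 * μ > 2 * C ^ 2 * (C ^ 2 * M ^ 2 - 1) := by
    have hx : (0:ℝ) < C ^ 2 := by positivity
    have h1 : 2 * C ^ 2 * (C ^ 2 * (C ^ 2 * M ^ 2 - 1)) < 2 * C ^ 2 * μ :=
      mul_lt_mul_of_pos_left hconst (by positivity)
    have h2 : 0 ≤ (C ^ 2 * M ^ 2 - 1) * (2 * C ^ 2 * C ^ 2 - 2 * C ^ 2 + 1) := by
      have : (0:ℝ) ≤ 2 * C ^ 2 * C ^ 2 - 2 * C ^ 2 + 1 := by nlinarith [sq_nonneg (C^2 - 1), sq_nonneg C]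
      exact mul_nonneg hK0 this
    nlinarith [h1, h2]
  have hmain : 2 * ⟪d, r⟫ + ‖d‖ ^ 2 < 0 := by
    have hc : (0:ℝ) < 1 + C ^ 2 * M ^ 2 := by positivity
    have htc2 : 2 * C ^ 2 * ⟪As d, As r⟫ ≤ 2 * C ^ 2 * (-((M ^ 2 + μ) * ‖d‖ ^ 2) / 2) :=
      mul_le_mul_of_nonneg_left htc (by positivity)
    have h1 : (1 + C ^ 2 * M ^ 2) * ⟪d, r⟫
        ≤ (C ^ 2 * M ^ 2 - 1) * ‖d‖ * ‖r‖ - C ^ 2 * (M ^ 2 + μ) * ‖d‖ ^ 2 := by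
      nlinarith [hpolar, htc2]
    have h2 : (1 + C ^ 2 * M ^ 2) * (2 * ⟪d, r⟫ + ‖d‖ ^ 2)
        ≤ 2 * ((C ^ 2 * M ^ 2 - 1) * ‖d‖ * ‖r‖)
          - ((C ^ 2 * M ^ 2 - 1) + 2 * C ^ 2 * μ) * ‖d‖ ^ 2 := by nlinarith [h1]
    have hxpos : (0:ℝ) < C ^ 2 := by positivity
    have key : 2 * ((C ^ 2 * M ^ 2 - 1) * ‖r‖)
        < ((C ^ 2 * M ^ 2 - 1) + 2 * C ^ 2 * μ) * (‖r‖ / C ^ 2) := by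
      rw [mul_div_assoc', lt_div_iff₀ hxpos]
      nlinarith [mul_lt_mul_of_pos_right hKμ hρ]
    have key2 : (2 * ((C ^ 2 * M ^ 2 - 1) * ‖r‖)) * ‖d‖
        < (((C ^ 2 * M ^ 2 - 1) + 2 * C ^ 2 * μ) * (‖r‖ / C ^ 2)) * ‖d‖ :=
      mul_lt_mul_of_pos_right key ht_pos
    have hcoeff : (0:ℝ) ≤ (C ^ 2 * M ^ 2 - 1) + 2 * C ^ 2 * μ := by positivity
    have key3 : (((C ^ 2 * M ^ 2 - 1) + 2 * C ^ 2 * μ) * (‖r‖ / C ^ 2)) * ‖d‖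
        ≤ ((C ^ 2 * M ^ 2 - 1) + 2 * C ^ 2 * μ) * ‖d‖ ^ 2 := by
      have hd2 : (‖r‖ / C ^ 2) * ‖d‖ ≤ ‖d‖ * ‖d‖ :=
        mul_le_mul_of_nonneg_right ht_low ht_pos.le
      have h4 := mul_le_mul_of_nonneg_left hd2 hcoeff
      calc (((C ^ 2 * M ^ 2 - 1) + 2 * C ^ 2 * μ) * (‖r‖ / C ^ 2)) * ‖d‖
          = ((C ^ 2 * M ^ 2 - 1) + 2 * C ^ 2 * μ) * ((‖r‖ / C ^ 2) * ‖d‖) := by ring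
        _ ≤ ((C ^ 2 * M ^ 2 - 1) + 2 * C ^ 2 * μ) * (‖d‖ * ‖d‖) := h4
        _ = ((C ^ 2 * M ^ 2 - 1) + 2 * C ^ 2 * μ) * ‖d‖ ^ 2 := by ring
    have h3 : 2 * ((C ^ 2 * M ^ 2 - 1) * ‖r‖) * ‖d‖
        < ((C ^ 2 * M ^ 2 - 1) + 2 * C ^ 2 * μ) * ‖d‖ ^ 2 := lt_of_lt_of_le key2 key3
    have hfin : (1 + C ^ 2 * M ^ 2) * (2 * ⟪d, r⟫ + ‖d‖ ^ 2) < 0 := by linarith [h2, h3]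
    by_contra hcon
    push_neg at hcon
    have : 0 ≤ (1 + C ^ 2 * M ^ 2) * (2 * ⟪d, r⟫ + ‖d‖ ^ 2) := mul_nonneg hc.le hcon
    linarith
  -- finish
  have hs : F uk1 - φ = r + d := by rw [hrdef, hddef]; abel
  have hsq : ‖F uk1 - φ‖ ^ 2 < ‖F uk - φ‖ ^ 2 := by
    rw [hs, @norm_add_sq_real]
    have : ⟪r, d⟫ = ⟪d, r⟫ := real_inner_comm d r
    rw [this]
    have : ‖F uk - φ‖ = ‖r‖ := rfl
    rw [this]
    linarith [hmain]
  exact lt_of_pow_lt_pow_left₀ 2 (norm_nonneg _) hsq
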